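/- For the Laplacian L = D(I − Wᵀ) and the matrix 𝓛 = Π(I − Wᵀ) of a strongly connected weighted directed graph, and for all vectors p, r ∈ ℝⁿ with pᵀ1 = 0 and rᵀ1 = 0, it holds that pᵀ L⁺ D Π⁻¹ r = pᵀ 𝓛⁺ r. -/
import Mathlib


open Matrix BigOperators

/-- The four Penrose equations characterizing the Moore–Penrose pseudoinverse. -/
def Penrose {m : Type*} [Fintype m] (M Mp : Matrix m m ℝ) : Prop :=
  M * Mp * M = M ∧ Mp * M * Mp = Mp ∧ (M * Mp)ᵀ = M * Mp ∧ (Mp * M)ᵀ = Mp * M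

/-- for the Laplacian `L = D(I − Wᵀ)` and `𝓛 = Π(I − Wᵀ)` of a strongly
connected weighted directed graph, for all `p ⟂ 1` and `r ⟂ 1`,
`pᵀ L⁺ D Π⁻¹ r = pᵀ 𝓛⁺ r`. -/
theorem stmt14
    (n : ℕ) (hn : 2 ≤ n)
    (A : Matrix (Fin n) (Fin n) ℝ)
    (hA : ∀ u v, 0 ≤ A u v)
    (hconn : ∀ u v : Fin n, Relation.ReflTransGen (fun a b => 0 < A a b) u v)
    (d : Fin n → ℝ) (hd : d = fun u => ∑ v, A u v) (hdpos : ∀ u, 0 < d u)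
    (W : Matrix (Fin n) (Fin n) ℝ)
    (hW : W = Aᵀ * Matrix.diagonal (fun u => (d u)⁻¹))
    (pdist : Fin n → ℝ) (hppos : ∀ v, 0 < pdist v) (hpsum : ∑ v, pdist v = 1)
    (hpstat : W.mulVec pdist = pdist)
    (L : Matrix (Fin n) (Fin n) ℝ) (hL : L = Matrix.diagonal d * (1 - Wᵀ))
    (calL : Matrix (Fin n) (Fin n) ℝ)
    (hcalL : calL = Matrix.diagonal pdist * (1 - Wᵀ))
    -- kernel assumptions (hold by strong connectivity):
    (hker1 : ∀ x : Fin n → ℝ,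
      ((1 : Matrix (Fin n) (Fin n) ℝ) - Wᵀ).mulVec x = 0 ↔ ∃ c : ℝ, x = fun _ => c)
    (hker2 : ∀ y : Fin n → ℝ,
      ((1 : Matrix (Fin n) (Fin n) ℝ) - W).mulVec y = 0 ↔ ∃ c : ℝ, y = c • pdist)
    (Lplus : Matrix (Fin n) (Fin n) ℝ) (hLplus : Penrose L Lplus)
    (calLplus : Matrix (Fin n) (Fin n) ℝ) (hcalLplus : Penrose calL calLplus) :
    ∀ p r : Fin n → ℝ, p ⬝ᵥ (fun _ => (1 : ℝ)) = 0 → r ⬝ᵥ (fun _ => (1 : ℝ)) = 0 →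
      p ⬝ᵥ (Lplus * Matrix.diagonal d *
          Matrix.diagonal (fun v => (pdist v)⁻¹)).mulVec r =
        p ⬝ᵥ calLplus.mulVec r := by
  intro p r hp hr
  obtain ⟨hL1, hL2, hL3, hL4⟩ := hLplus
  obtain ⟨hc1, hc2, hc3, hc4⟩ := hcalLplus
  -- transpose of calL
  have hcalLT : calLᵀ = (1 - W) * Matrix.diagonal pdist := by
    rw [hcalL, Matrix.transpose_mul, Matrix.transpose_sub, Matrix.transpose_one,
      Matrix.transpose_transpose, Matrix.diagonal_transpose]
  -- calLᵀ *ᵥ 1 = 0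
  have hT1 : calLᵀ.mulVec (fun _ => (1 : ℝ)) = 0 := by
    rw [hcalLT, ← Matrix.mulVec_mulVec]
    have h : Matrix.diagonal pdist *ᵥ (fun _ => (1 : ℝ)) = pdist := by
      ext v; simp [Matrix.mulVec_diagonal]
    rw [h, Matrix.sub_mulVec, Matrix.one_mulVec, hpstat, sub_self]
  -- kernel of calLᵀ is constants
  have hkerT : ∀ y : Fin n → ℝ, calLᵀ.mulVec y = 0 → ∃ c : ℝ, y = fun _ => c := by
    intro y hy
    rw [hcalLT, ← Matrix.mulVec_mulVec] at hy
    obtain ⟨c, hc⟩ := (hker2 _).mp hy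
    refine ⟨c, funext fun v => ?_⟩
    have h := congrFun hc v
    rw [Matrix.mulVec_diagonal] at h
    have hv : pdist v ≠ 0 := (hppos v).ne'
    have h' : pdist v * y v = pdist v * c := by
      simpa [Pi.smul_apply, smul_eq_mul, mul_comm] using h
    exact mul_left_cancel₀ hv h'
  -- kernel of L is constants
  have hkerL : ∀ y : Fin n → ℝ, L.mulVec y = 0 → ∃ c : ℝ, y = fun _ => c := by
    intro y hy
    apply (hker1 y).mp
    rw [hL, ← Matrix.mulVec_mulVec] at hy
    funext v
    have h := congrFun hy v
    rw [Matrix.mulVec_diagonal] at h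
    rcases mul_eq_zero.mp h with h' | h'
    · exact absurd h' (hdpos v).ne'
    · simpa using h'
  set x : Fin n → ℝ := calLplus.mulVec r with hx
  -- r - calL *ᵥ x is in ker calLᵀ
  have hres : calLᵀ.mulVec (r - calL.mulVec x) = 0 := by
    rw [Matrix.mulVec_sub, hx, Matrix.mulVec_mulVec, Matrix.mulVec_mulVec]
    have hm : calLᵀ * (calL * calLplus) = calLᵀ := by
      rw [← hc3, ← Matrix.transpose_mul, hc1]
    rw [Matrix.mul_assoc, hm, sub_self]
  obtain ⟨c, hc⟩ := hkerT _ hres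
  -- the constant is zero
  have hone : (fun _ => (1 : ℝ)) ⬝ᵥ calL.mulVec x = 0 := by
    rw [Matrix.dotProduct_mulVec, ← Matrix.mulVec_transpose, hT1]
    simp
  have hc0 : c = 0 := by
    have h1r : (fun _ => (1 : ℝ)) ⬝ᵥ r = 0 := by
      rw [dotProduct_comm]; exact hr
    have hsum : (fun _ => (1 : ℝ)) ⬝ᵥ (r - calL.mulVec x) = c * n := by
      rw [hc]
      simp [dotProduct, Finset.sum_const, mul_comm]
    have hz : c * n = 0 := by
      rw [← hsum, dotProduct_sub, h1r, hone, sub_self]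
    have hn0 : (n : ℝ) ≠ 0 := by positivity
    exact (mul_eq_zero.mp hz).resolve_right hn0
  have hQr : calL.mulVec x = r := by
    rw [hc0] at hc
    have h0 : r - calL.mulVec x = 0 := by rw [hc]; funext v; rfl
    exact (sub_eq_zero.mp h0).symm
  -- B *ᵥ x = Π⁻¹ r
  have hBx : ((1 : Matrix (Fin n) (Fin n) ℝ) - Wᵀ).mulVec x
      = fun v => (pdist v)⁻¹ * r v := by
    rw [hcalL, ← Matrix.mulVec_mulVec] at hQr
    funext v
    have h := congrFun hQr v
    rw [Matrix.mulVec_diagonal] at h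
    have hv : pdist v ≠ 0 := (hppos v).ne'
    rw [inv_mul_eq_div, eq_div_iff hv, mul_comm]
    exact h
  -- L *ᵥ x = D Π⁻¹ r
  have hLx : L.mulVec x
      = (Matrix.diagonal d * Matrix.diagonal (fun v => (pdist v)⁻¹)).mulVec r := by
    rw [hL, ← Matrix.mulVec_mulVec, hBx, ← Matrix.mulVec_mulVec]
    funext v
    simp [Matrix.mulVec_diagonal]
  have hgoal : (Lplus * Matrix.diagonal d *
      Matrix.diagonal (fun v => (pdist v)⁻¹)).mulVec r = (Lplus * L).mulVec x := by
    rw [Matrix.mul_assoc, ← Matrix.mulVec_mulVec, ← hLx, Matrix.mulVec_mulVec]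
  rw [hgoal]
  obtain ⟨c', hc'⟩ := hkerL ((Lplus * L).mulVec x - x) (by
    rw [Matrix.mulVec_sub, Matrix.mulVec_mulVec, ← Matrix.mul_assoc, hL1, sub_self])
  have hsplit : (Lplus * L).mulVec x = x + fun _ => c' := by
    rw [← hc']; funext v; simp
  rw [hsplit, dotProduct_add]
  have hpc : p ⬝ᵥ (fun _ => c') = 0 := by
    have h : p ⬝ᵥ (fun _ => c') = (p ⬝ᵥ fun _ => (1 : ℝ)) * c' := by
      simp [dotProduct, Finset.sum_mul]
    rw [h, hp, zero_mul]
  rw [hpc, add_zero]
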